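/- Let G be a finite simple connected graph, and let u and v be vertices such that v ∈ F(u) and d(x,v) ≤ e(u) for every x ∈ N[u]. Then there exists a set S' ⊆ V such that: v ∈ S'; S' is u-transitive; and d(s,x) ≤ e(u) for every s ∈ S' and every x ∈ N[u]. -/

import Mathlib

variable {V : Type*}

/-- The closed neighbourhood `N[v]` of a vertex. -/
def closedNbhd (G : SimpleGraph V) (v : V) : Set V := insert v (G.neighborSet v)

/-- `N[S] = ⋃_{v ∈ S} N[v]`. -/
def closedNbhdSet (G : SimpleGraph V) (S : Set V) : Set V := ⋃ v ∈ S, closedNbhd G v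

/-- A vertex `v` is an extremity if the subgraph induced on `V \ N[v]` is
connected (possibly empty). -/
def IsExtremity (G : SimpleGraph V) (v : V) : Prop :=
  (G.induce (closedNbhd G v)ᶜ).Preconnected

/-- `M` is a module: every vertex outside `M` is adjacent to all of `M` or none of `M`. -/
def IsModuleSet (G : SimpleGraph V) (M : Set V) : Prop :=
  ∀ z ∉ M, ∀ x ∈ M, ∀ y ∈ M, (G.Adj z x ↔ G.Adj z y)

/-- A graph is prime if its only modules are `∅`, `V` and the singletons. -/
def IsPrimeGraph (G : SimpleGraph V) : Prop :=
  ∀ M : Set V, IsModuleSet G M → M = ∅ ∨ M = Set.univ ∨ ∃ v, M = {v}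

/-- Eccentricity of a vertex in a finite graph. -/
noncomputable def ecc [Fintype V] (G : SimpleGraph V) (u : V) : ℕ :=
  Finset.univ.sup (G.dist u)

/-- Diameter of a finite graph. -/
noncomputable def gdiam [Fintype V] (G : SimpleGraph V) : ℕ :=
  Finset.univ.sup fun u => ecc G u

/-- `u ⊥_w v`: vertices `u` and `v` lie in different connected components of the
subgraph induced on `V \ N[w]`. -/
def Perp (G : SimpleGraph V) (w u v : V) : Prop :=
  u ∉ closedNbhd G w ∧ v ∉ closedNbhd G w ∧
    ¬ ∃ p : G.Walk u v, ∀ z ∈ p.support, z ∉ closedNbhd G w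

/-- `S` is `u`-transitive: for every `x ∈ S` and vertex `y` distinct from and
nonadjacent to `x`, `x ⊥_y u` implies `y ∈ S`. -/
def UTransitive (G : SimpleGraph V) (u : V) (S : Set V) : Prop :=
  ∀ x ∈ S, ∀ y : V, y ≠ x → ¬ G.Adj x y → Perp G y x u → y ∈ S

/-- `S` is a dominating set: every vertex lies in `N[S]`. -/
def IsDominatingSet (G : SimpleGraph V) (S : Set V) : Prop :=
  ∀ v : V, ∃ s ∈ S, v ∈ closedNbhd G s

/-- `D` is a dominating target: every superset of `D` inducing a connected
subgraph is a dominating set. -/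
def IsDomTarget (G : SimpleGraph V) (D : Set V) : Prop :=
  ∀ S : Set V, D ⊆ S → (G.induce S).Connected → IsDominatingSet G S

/-- An asteroidal set: an independent set `A` such that for every `a ∈ A`, all
vertices of `A \ {a}` lie in a single connected component of the subgraph
induced on `V \ N[a]`. -/
def IsAsteroidalSet (G : SimpleGraph V) (A : Set V) : Prop :=
  (A.Pairwise fun x y => ¬ G.Adj x y) ∧
  ∀ a ∈ A, ∀ b ∈ A, ∀ c ∈ A, b ≠ a → c ≠ a →
    ∃ p : G.Walk b c, ∀ z ∈ p.support, z ∉ closedNbhd G a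

theorem stmt_14 [Fintype V] (G : SimpleGraph V) (hG : G.Connected)
    (u v : V) (hv : G.dist u v = ecc G u)
    (hx : ∀ x ∈ closedNbhd G u, G.dist x v ≤ ecc G u) :
    ∃ S' : Set V, v ∈ S' ∧ UTransitive G u S' ∧
      ∀ s ∈ S', ∀ x ∈ closedNbhd G u, G.dist s x ≤ ecc G u := by
  refine ⟨{s | ∀ x ∈ closedNbhd G u, G.dist s x ≤ ecc G u}, ?_, ?_, fun s hs => hs⟩
  · intro w hw
    rw [G.dist_comm]
    exact hx w hw
  · intro x hxS y hyx hadj ⟨hxN, huN, hnwalk⟩ w hw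
    -- build a walk from x to u through w
    have hdxw : G.dist x w ≤ ecc G u := hxS w hw
    obtain ⟨p, hp⟩ := hG.exists_walk_length_eq_dist x w
    have hwu : w = u ∨ G.Adj u w := by
      rcases hw with h | h
      · exact Or.inl h
      · exact Or.inr h
    obtain ⟨q, hq1⟩ : ∃ q : G.Walk x u, (∀ z ∈ q.support, z ∈ p.support ∨ z = u) := by
      rcases hwu with rfl | hadj'
      · exact ⟨p, fun z hz => Or.inl hz⟩
      · refine ⟨p.append (SimpleGraph.Walk.cons hadj'.symm SimpleGraph.Walk.nil), ?_⟩
        intro z hz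
        rw [SimpleGraph.Walk.mem_support_append_iff] at hz
        rcases hz with hz | hz
        · exact Or.inl hz
        · simp only [SimpleGraph.Walk.support_cons, SimpleGraph.Walk.support_nil,
            List.mem_cons, List.mem_singleton] at hz
          rcases hz with rfl | hz
          · exact Or.inl (SimpleGraph.Walk.end_mem_support p)
          · rcases hz with rfl | hz
            · exact Or.inr rfl
            · exact absurd hz List.not_mem_nil
    push_neg at hnwalk
    obtain ⟨z, hzq, hzN⟩ := hnwalk q
    have hzp : z ∈ p.support := by
      rcases hq1 z hzq with h | rfl
      · exact h
      · exact absurd hzN huN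
    classical
    have hzx : z ≠ x := fun h => hxN (h ▸ hzN)
    -- split p at z
    set t := p.takeUntil z hzp with ht
    set d := p.dropUntil z hzp with hd
    have hsum : t.length + d.length = p.length := by
      rw [ht, hd, ← SimpleGraph.Walk.length_append, SimpleGraph.Walk.take_spec]
    have htpos : 1 ≤ t.length := by
      rcases Nat.eq_zero_or_pos t.length with h0 | h
      · exfalso
        have := SimpleGraph.Walk.eq_of_length_eq_zero h0
        exact hzx this.symm
      · exact h
    have hdyz : G.dist y z ≤ 1 := by
      rcases hzN with h | h
      · rw [h]; simp [SimpleGraph.dist_self]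
      · exact le_trans (SimpleGraph.dist_le (SimpleGraph.Walk.cons (show G.Adj y z from h) SimpleGraph.Walk.nil)) (by simp)
    have hdzw : G.dist z w ≤ d.length := SimpleGraph.dist_le d
    calc G.dist y w ≤ G.dist y z + G.dist z w := hG.dist_triangle
      _ ≤ 1 + d.length := Nat.add_le_add hdyz hdzw
      _ ≤ t.length + d.length := Nat.add_le_add_right htpos _
      _ = p.length := hsum
      _ = G.dist x w := hp
      _ ≤ ecc G u := hdxw
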